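/- Let K_R, K_T, τ be natural numbers with 1 ≤ τ ≤ K_R and τ < K_T, let j ∈ Fin K_R and let π be a permutation of Fin K_T. Work in the multivariate polynomial ring ℂ[X_{r,c} : r ∈ Fin K_R, c ∈ Fin K_T]. Fix k ∈ Fin K_R with k ∉ {j+1, …, j+τ−1} (row indices modulo K_R). For i ∈ Fin K_T let M_{k,i} denote the determinant of the τ×τ matrix of indeterminates whose rows are the rows j+1, …, j+τ−1 (mod K_R) followed by row k, and whose columns are π(i), π(i+1), …, π(i+τ−1) (indices modulo K_T). Then the K_T polynomials M_{k,0}, M_{k,1}, …, M_{k,K_T−1} are linearly independent over ℂ. -/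

import Mathlib

/-- The τ×τ channel minor `M_{k,i}` as a polynomial in independent indeterminates
`X_{r,c}` (`r` a receiver, `c` a transmitter): its rows are the rows
`j+1, …, j+τ-1` (mod `K_R`) of the matrix of indeterminates followed by row `k`, and its
columns are `π(i), π(i+1), …, π(i+τ-1)` (arguments mod `K_T`). -/
noncomputable def channelMinor (K_R K_T τ : ℕ) (j : Fin K_R) (π : Equiv.Perm (Fin K_T))
    (k : Fin K_R) (i : Fin K_T) : MvPolynomial (Fin K_R × Fin K_T) ℂ :=
  Matrix.det (Matrix.of fun p q : Fin τ =>
    MvPolynomial.X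
      ((if _ : (p : ℕ) < τ - 1 then
          (⟨((j : ℕ) + (p : ℕ) + 1) % K_R, Nat.mod_lt _ j.pos⟩ : Fin K_R)
        else k),
       π ⟨((i : ℕ) + (q : ℕ)) % K_T, Nat.mod_lt _ i.pos⟩))

open MvPolynomial

private lemma mod_add_cancel {n a u v : ℕ} (hu : u < n) (hv : v < n)
    (h : (a + u) % n = (a + v) % n) : u = v := by
  have h' : u % n = v % n := Nat.ModEq.add_left_cancel' a h
  rwa [Nat.mod_eq_of_lt hu, Nat.mod_eq_of_lt hv] at h'

/-- The row function of the minor. -/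
private def Rfun (K_R τ : ℕ) (j k : Fin K_R) (p : Fin τ) : Fin K_R :=
  if _ : (p : ℕ) < τ - 1 then
    (⟨((j : ℕ) + (p : ℕ) + 1) % K_R, Nat.mod_lt _ j.pos⟩ : Fin K_R)
  else k

/-- The column function of the minor. -/
private def Cfun (K_T τ : ℕ) (π : Equiv.Perm (Fin K_T)) (i : Fin K_T) (q : Fin τ) :
    Fin K_T :=
  π ⟨((i : ℕ) + (q : ℕ)) % K_T, Nat.mod_lt _ i.pos⟩

private lemma Rfun_inj {K_R τ : ℕ} (hτR : τ ≤ K_R) (j k : Fin K_R)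
    (hk : ∀ t : ℕ, t < τ - 1 → (k : ℕ) ≠ ((j : ℕ) + t + 1) % K_R) :
    Function.Injective (Rfun K_R τ j k) := by
  intro p p' h
  unfold Rfun at h
  split_ifs at h with h1 h2 h2
  · have := congrArg Fin.val h
    simp only at this
    have hp : (p : ℕ) + 1 < K_R := by omega
    have hp' : (p' : ℕ) + 1 < K_R := by omega
    have : (p : ℕ) + 1 = (p' : ℕ) + 1 := by
      apply mod_add_cancel hp hp'
      simpa [← Nat.add_assoc] using this
    exact Fin.ext (by omega)
  · exact absurd (congrArg Fin.val h).symm (hk _ h1)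
  · exact absurd (congrArg Fin.val h) (hk _ h2)
  · have hp : (p : ℕ) = τ - 1 := by omega
    have hp' : (p' : ℕ) = τ - 1 := by omega
    exact Fin.ext (by omega)

private lemma Cfun_inj {K_T τ : ℕ} (hτT : τ < K_T) (π : Equiv.Perm (Fin K_T))
    (i : Fin K_T) : Function.Injective (Cfun K_T τ π i) := by
  intro q q' h
  unfold Cfun at h
  have h2 := congrArg Fin.val (π.injective h)
  simp only at h2
  exact Fin.ext (mod_add_cancel (lt_trans q.isLt hτT) (lt_trans q'.isLt hτT) h2)

/-- a cyclic window of length `τ < n` determines its starting point. -/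
private lemma window_eq {K_T τ : ℕ} (hτ1 : 1 ≤ τ) (hτT : τ < K_T) (i i0 : Fin K_T)
    (h1 : ∀ p : Fin τ, ∃ q : Fin τ, ((i : ℕ) + p) % K_T = ((i0 : ℕ) + q) % K_T)
    (h2 : ∀ q : Fin τ, ∃ p : Fin τ, ((i0 : ℕ) + q) % K_T = ((i : ℕ) + p) % K_T) :
    i = i0 := by
  obtain ⟨q0, hq0⟩ := h1 ⟨0, hτ1⟩
  simp only [Nat.add_zero] at hq0
  have hi : (i : ℕ) = ((i0 : ℕ) + (q0 : ℕ)) % K_T := by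
    rw [← Nat.mod_eq_of_lt i.isLt]; exact hq0
  rcases Nat.eq_zero_or_pos (q0 : ℕ) with h0 | h0
  · apply Fin.ext
    rw [hi, h0, Nat.add_zero, Nat.mod_eq_of_lt i0.isLt]
  · exfalso
    obtain ⟨p, hp⟩ := h2 ⟨(q0 : ℕ) - 1, by omega⟩
    simp only at hp
    have hmod : ((i : ℕ) + (p : ℕ)) % K_T = (((i0 : ℕ) + (q0 : ℕ)) + (p : ℕ)) % K_T := by
      conv_lhs => rw [hi]
      rw [Nat.mod_add_mod]
    have key : ((i0 : ℕ) + ((q0 : ℕ) - 1) + 0) % K_T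
        = ((i0 : ℕ) + ((q0 : ℕ) - 1) + ((p : ℕ) + 1)) % K_T := by
      rw [Nat.add_zero, hp, hmod]
      congr 1
      omega
    have : (0 : ℕ) = (p : ℕ) + 1 :=
      mod_add_cancel (by omega) (by omega) key
    omega

/-- The exponent (monomial) of the determinant term of `channelMinor` indexed by `σ`. -/
private noncomputable def Dexp {K_R K_T τ : ℕ} (j k : Fin K_R) (π : Equiv.Perm (Fin K_T))
    (i : Fin K_T) (σ : Equiv.Perm (Fin τ)) : (Fin K_R × Fin K_T) →₀ ℕ :=
  ∑ p : Fin τ, Finsupp.single (Rfun K_R τ j k (σ p), Cfun K_T τ π i p) 1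

private lemma Dexp_apply {K_R K_T τ : ℕ} (j k : Fin K_R) (π : Equiv.Perm (Fin K_T))
    (i : Fin K_T) (σ : Equiv.Perm (Fin τ)) (w : Fin K_R × Fin K_T) :
    Dexp j k π i σ w
      = ∑ p : Fin τ, (if (Rfun K_R τ j k (σ p), Cfun K_T τ π i p) = w then 1 else 0) := by
  unfold Dexp
  rw [Finsupp.finset_sum_apply]
  simp [Finsupp.single_apply]

private lemma Dexp_mem {K_R K_T τ : ℕ} {j k : Fin K_R} {π : Equiv.Perm (Fin K_T)}
    {i i' : Fin K_T} {σ σ' : Equiv.Perm (Fin τ)}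
    (h : Dexp j k π i σ = Dexp j k π i' σ') (p : Fin τ) :
    ∃ q : Fin τ, (Rfun K_R τ j k (σ p), Cfun K_T τ π i p)
      = (Rfun K_R τ j k (σ' q), Cfun K_T τ π i' q) := by
  have h1 : Dexp j k π i σ (Rfun K_R τ j k (σ p), Cfun K_T τ π i p)
      = Dexp j k π i' σ' (Rfun K_R τ j k (σ p), Cfun K_T τ π i p) := by rw [h]
  rw [Dexp_apply, Dexp_apply] at h1
  have hL : (0 : ℕ)
      < ∑ q : Fin τ, (if (Rfun K_R τ j k (σ q), Cfun K_T τ π i q)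
          = (Rfun K_R τ j k (σ p), Cfun K_T τ π i p) then 1 else 0) := by
    apply Finset.sum_pos' (fun _ _ => by positivity)
    exact ⟨p, Finset.mem_univ p, by simp⟩
  rw [h1] at hL
  obtain ⟨q, _, hq⟩ := Finset.exists_ne_zero_of_sum_ne_zero hL.ne'
  rcases eq_or_ne (Rfun K_R τ j k (σ' q), Cfun K_T τ π i' q)
      (Rfun K_R τ j k (σ p), Cfun K_T τ π i p) with he | he
  · exact ⟨q, he.symm⟩
  · rw [if_neg he] at hq
    exact absurd rfl hq

private lemma Dexp_eq_iff {K_R K_T τ : ℕ} (hτ1 : 1 ≤ τ) (hτR : τ ≤ K_R) (hτT : τ < K_T)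
    (j k : Fin K_R) (π : Equiv.Perm (Fin K_T))
    (hk : ∀ t : ℕ, t < τ - 1 → (k : ℕ) ≠ ((j : ℕ) + t + 1) % K_R)
    (i i0 : Fin K_T) (σ : Equiv.Perm (Fin τ)) :
    Dexp j k π i σ = Dexp (τ := τ) j k π i0 1 ↔ (i = i0 ∧ σ = 1) := by
  constructor
  · intro h
    have hC := Cfun_inj hτT π
    have hR := Rfun_inj hτR j k hk
    -- first, i = i0
    have hii : i = i0 := by
      apply window_eq hτ1 hτT
      · intro p
        obtain ⟨q, hq⟩ := Dexp_mem h p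
        refine ⟨q, ?_⟩
        have := congrArg Fin.val (π.injective (congrArg Prod.snd hq))
        simpa using this
      · intro q
        obtain ⟨p, hp⟩ := Dexp_mem h.symm q
        refine ⟨p, ?_⟩
        have := congrArg Fin.val (π.injective (congrArg Prod.snd hp))
        simpa using this
    subst hii
    refine ⟨rfl, ?_⟩
    ext p
    obtain ⟨q, hq⟩ := Dexp_mem h p
    have hpq : p = q := hC i (congrArg Prod.snd hq)
    subst hpq
    have hsp : σ p = p := hR (by simpa using congrArg Prod.fst hq)
    simp [hsp]
  · rintro ⟨rfl, rfl⟩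
    rfl

theorem channelMinors_fixed_receiver_linearIndependent_aux
    (K_R K_T τ : ℕ) (hτ1 : 1 ≤ τ) (hτR : τ ≤ K_R) (hτT : τ < K_T)
    (j : Fin K_R) (π : Equiv.Perm (Fin K_T))
    (k : Fin K_R) (hk : ∀ t : ℕ, t < τ - 1 → (k : ℕ) ≠ ((j : ℕ) + t + 1) % K_R)
    (i i0 : Fin K_T) :
    MvPolynomial.coeff (Dexp (τ := τ) j k π i0 1)
      (Matrix.det (Matrix.of fun p q : Fin τ =>
        (MvPolynomial.X (Rfun K_R τ j k p, Cfun K_T τ π i q)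
          : MvPolynomial (Fin K_R × Fin K_T) ℂ)))
      = if i = i0 then 1 else 0 := by
  rw [Matrix.det_apply]
  have hterm : ∀ σ : Equiv.Perm (Fin τ),
      (∏ p : Fin τ, (Matrix.of fun p q : Fin τ =>
        (MvPolynomial.X (Rfun K_R τ j k p, Cfun K_T τ π i q)
          : MvPolynomial (Fin K_R × Fin K_T) ℂ)) (σ p) p)
      = MvPolynomial.monomial (Dexp j k π i σ) (1 : ℂ) := by
    intro σ
    unfold Dexp
    rw [MvPolynomial.monomial_sum_one]
    simp [MvPolynomial.X, Matrix.of_apply]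
  rw [MvPolynomial.coeff_sum]
  simp only [MvPolynomial.coeff_smul, hterm, MvPolynomial.coeff_monomial]
  simp only [Dexp_eq_iff hτ1 hτR hτT j k π hk i i0]
  by_cases hii : i = i0
  · subst hii
    simp only [true_and]
    rw [Finset.sum_eq_single (1 : Equiv.Perm (Fin τ))]
    · simp
    · intro σ _ hσ
      simp [hσ]
    · exact fun h => absurd (Finset.mem_univ _) h
  · simp [hii]

private lemma channelMinor_eq (K_R K_T τ : ℕ) (j : Fin K_R) (π : Equiv.Perm (Fin K_T))
    (k : Fin K_R) (i : Fin K_T) :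
    channelMinor K_R K_T τ j π k i
      = Matrix.det (Matrix.of fun p q : Fin τ =>
        (MvPolynomial.X (Rfun K_R τ j k p, Cfun K_T τ π i q)
          : MvPolynomial (Fin K_R × Fin K_T) ℂ)) := rfl

/-- inner claim of Lemma 2, eq. (25): for a fixed admissible row `k`
(not among `j+1, …, j+τ-1` mod `K_R`), the `K_T` sliding-window channel minors
`M_{k,0}, …, M_{k,K_T-1}` are linearly independent over `ℂ`. -/
theorem channelMinors_fixed_receiver_linearIndependent
    (K_R K_T τ : ℕ) (hτ1 : 1 ≤ τ) (hτR : τ ≤ K_R) (hτT : τ < K_T)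
    (j : Fin K_R) (π : Equiv.Perm (Fin K_T))
    (k : Fin K_R) (hk : ∀ t : ℕ, t < τ - 1 → (k : ℕ) ≠ ((j : ℕ) + t + 1) % K_R) :
    LinearIndependent ℂ (fun i : Fin K_T => channelMinor K_R K_T τ j π k i) := by
  rw [Fintype.linearIndependent_iff]
  intro g hg i0
  have hco := congrArg (MvPolynomial.coeff (Dexp (τ := τ) j k π i0 1)) hg
  rw [MvPolynomial.coeff_sum] at hco
  simp only [MvPolynomial.coeff_smul, channelMinor_eq,
    channelMinors_fixed_receiver_linearIndependent_aux K_R K_T τ hτ1 hτR hτT j π k hk,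
    MvPolynomial.coeff_zero, smul_eq_mul, mul_ite, mul_one, mul_zero,
    Finset.sum_ite_eq', Finset.mem_univ, if_true] at hco
  exact hco
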